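/- In the CFI gadget X₃ (inner vertices m_i indexed by even-weight vectors i ∈ {0,1}³, outer vertex pairs {a_j, b_j} for j = 1,2,3, with m_i adjacent to a_j if i_j = 0 and to b_j if i_j = 1), a permutation of the outer vertices that maps each pair {a_j, b_j} to itself extends to an automorphism of X₃ if and only if the number of pairs it swaps is even. -/

import Mathlib

/-- Vertices of the CFI gadget `X₃`: inner vertices are the even-weight vectors
in `{0,1}³`, outer vertices are pairs `(j, b)` with `(j, false) = a_j`, `(j, true) = b_j`. -/
def CFIVertex : Type :=
  {i : Fin 3 → Bool // Even (Finset.univ.filter (fun j => i j = true)).card} ⊕ (Fin 3 × Bool)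

/-- The CFI gadget `X₃`: the inner vertex `m_i` is adjacent to the outer vertex
`a_j` if `i_j = 0` and to `b_j` if `i_j = 1`. -/
def cfiGadget : SimpleGraph CFIVertex :=
  SimpleGraph.fromRel (fun x y =>
    match x, y with
    | Sum.inl i, Sum.inr (j, b) => i.val j = b
    | _, _ => False)

lemma cfi_parity : ∀ ε i : Fin 3 → Bool,
    Even (Finset.univ.filter (fun j => xor (ε j) (i j) = true)).card →
    Even (Finset.univ.filter (fun j => i j = true)).card →
    Even (Finset.univ.filter (fun j => ε j = true)).card := by decide

lemma cfi_parity' : ∀ ε i : Fin 3 → Bool,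
    Even (Finset.univ.filter (fun j => ε j = true)).card →
    Even (Finset.univ.filter (fun j => i j = true)).card →
    Even (Finset.univ.filter (fun j => xor (ε j) (i j) = true)).card := by decide

lemma cfi_adj_inl_inr (i : {i : Fin 3 → Bool // Even (Finset.univ.filter (fun j => i j = true)).card})
    (j : Fin 3) (b : Bool) :
    cfiGadget.Adj (Sum.inl i) (Sum.inr (j, b)) ↔ i.val j = b := by
  simp only [cfiGadget, SimpleGraph.fromRel_adj]
  constructor
  · rintro ⟨-, h | h⟩
    · exact h
    · exact absurd h not_false
  · intro h
    exact ⟨Sum.inl_ne_inr, Or.inl h⟩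

lemma cfi_not_adj_inr_inr (p q : Fin 3 × Bool) :
    ¬ cfiGadget.Adj (Sum.inr p) (Sum.inr q) := by
  simp only [cfiGadget, SimpleGraph.fromRel_adj]
  rintro ⟨-, h | h⟩ <;> exact h

/-- A permutation of the outer vertices of `X₃` fixing each pair `{a_j, b_j}` setwise
(swapping exactly the pairs `j` with `ε j = true`) extends to an automorphism of `X₃`
iff it swaps an even number of pairs. -/
theorem cfiGadget_extension_iff_even (ε : Fin 3 → Bool) :
    (∃ σ : Equiv.Perm CFIVertex,
      (∀ x y, cfiGadget.Adj (σ x) (σ y) ↔ cfiGadget.Adj x y) ∧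
      ∀ (j : Fin 3) (b : Bool), σ (Sum.inr (j, b)) = Sum.inr (j, xor (ε j) b)) ↔
    Even (Finset.univ.filter (fun j => ε j = true)).card := by
  constructor
  · rintro ⟨σ, hadj, houter⟩
    -- consider the inner vertex with i = 0
    set i0 : {i : Fin 3 → Bool // Even (Finset.univ.filter (fun j => i j = true)).card} :=
      ⟨fun _ => false, by decide⟩ with hi0
    -- σ maps inner vertex to an inner vertex
    have hinner : ∃ k, σ (Sum.inl i0) = Sum.inl k := by
      rcases h : σ (Sum.inl i0) with k | p
      · exact ⟨k, rfl⟩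
      · exfalso
        have hA : cfiGadget.Adj (Sum.inl i0) (Sum.inr (0, false)) :=
          (cfi_adj_inl_inr i0 0 false).2 rfl
        have := (hadj (Sum.inl i0) (Sum.inr (0, false))).2 hA
        rw [h, houter] at this
        exact cfi_not_adj_inr_inr _ _ this
    obtain ⟨k, hk⟩ := hinner
    have hkval : ∀ j, k.val j = xor (ε j) (i0.val j) := by
      intro j
      have hA : cfiGadget.Adj (Sum.inl i0) (Sum.inr (j, i0.val j)) :=
        (cfi_adj_inl_inr i0 j (i0.val j)).2 rfl
      have := (hadj (Sum.inl i0) (Sum.inr (j, i0.val j))).2 hA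
      rw [hk, houter] at this
      exact (cfi_adj_inl_inr k j _).1 this
    have hkeven := k.property
    have : k.val = fun j => xor (ε j) (i0.val j) := funext hkval
    rw [this] at hkeven
    exact cfi_parity ε i0.val hkeven i0.property
  · intro hε
    -- build the automorphism
    have key : ∀ i : {i : Fin 3 → Bool // Even (Finset.univ.filter (fun j => i j = true)).card},
        Even (Finset.univ.filter (fun j => xor (ε j) (i.val j) = true)).card :=
      fun i => cfi_parity' ε i.val hε i.property
    let f : CFIVertex → CFIVertex := fun x =>
      match x with
      | Sum.inl i => Sum.inl ⟨fun j => xor (ε j) (i.val j), key i⟩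
      | Sum.inr (j, b) => Sum.inr (j, xor (ε j) b)
    have hinv : Function.Involutive f := by
      rintro (i | ⟨j, b⟩)
      · simp only [f]
        congr 1
        ext j
        simp [Bool.xor_assoc]
      · simp [f, Bool.xor_assoc]; rfl
    refine ⟨hinv.toPerm, ?_, fun j b => rfl⟩
    intro x y
    have hfadj : ∀ u v : CFIVertex, cfiGadget.Adj u v → cfiGadget.Adj (f u) (f v) := by
      rintro (i | ⟨j, b⟩) (i' | ⟨j', b'⟩) h
      · exfalso
        rcases h with ⟨-, h | h⟩ <;> exact h
      · have := (cfi_adj_inl_inr i j' b').1 h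
        exact (cfi_adj_inl_inr _ j' _).2 (by simp [this])
      · have := (cfi_adj_inl_inr i' j b).1 h.symm
        exact ((cfi_adj_inl_inr _ j _).2 (by simp [this])).symm
      · exact absurd h (cfi_not_adj_inr_inr _ _)
    constructor
    · intro h
      have := hfadj _ _ h
      rwa [show ∀ z, f (Function.Involutive.toPerm f hinv z) = z from hinv, 
           show ∀ z, f (Function.Involutive.toPerm f hinv z) = z from hinv] at this
    · exact hfadj x y
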